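/- Let H_k denote the k-th Hermite tensor in m dimensions. For any x ∈ ℝ^m with ‖x‖₂ ≤ B, the Euclidean (Frobenius) norm satisfies ‖H_k(x)‖₂ ≤ 2^k m^{k/4} B^k k^{−k/2} exp(C(k,2)/B²), where C(k,2) = k(k−1)/2. -/

import Mathlib

open Finset

/-- Entry of the k-th Hermite tensor in m dimensions (partitions of [k] into
singletons and pairs, encoded as involutions of Fin k). -/
noncomputable def hermiteEntry (m k : ℕ) (x : Fin m → ℝ) (i : Fin k → Fin m) : ℝ :=
  (Real.sqrt (Nat.factorial k))⁻¹ *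
    ∑ π ∈ Finset.univ.filter (fun π : Equiv.Perm (Fin k) => π * π = 1),
      (∏ a ∈ Finset.univ.filter (fun a : Fin k => π a = a), x (i a)) *
      (∏ a ∈ Finset.univ.filter (fun a : Fin k => a < π a),
        -(if i a = i (π a) then (1 : ℝ) else 0))

/-- Squared Frobenius norm of the k-th Hermite tensor in m dimensions. -/
noncomputable def hermiteNormSq (m k : ℕ) (x : Fin m → ℝ) : ℝ :=
  ∑ i : Fin k → Fin m, hermiteEntry m k x i ^ 2

section helpers

lemma sum_fn_prod {α β : Type*} [Fintype α] [DecidableEq α] [Fintype β]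
    (g : α → β → ℝ) : ∑ u : α → β, ∏ b, g b (u b) = ∏ b, ∑ j, g b j := by
  rw [Finset.prod_univ_sum]
  exact (Fintype.sum_equiv (Equiv.refl _) _ _ (fun u => rfl)).symm.trans
    (Finset.sum_congr (by simp [Fintype.piFinset_univ]) (fun _ _ => rfl))

lemma minkowski2 {ι : Type*} [Fintype ι] (u w : ι → ℝ) :
    Real.sqrt (∑ i, (u i + w i)^2) ≤ Real.sqrt (∑ i, u i ^ 2) + Real.sqrt (∑ i, w i ^ 2) := by
  have hA : (0:ℝ) ≤ ∑ i, u i ^ 2 := Finset.sum_nonneg fun i _ => sq_nonneg _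
  have hB : (0:ℝ) ≤ ∑ i, w i ^ 2 := Finset.sum_nonneg fun i _ => sq_nonneg _
  have hcs : (∑ i, u i * w i) ≤ Real.sqrt (∑ i, u i ^ 2) * Real.sqrt (∑ i, w i ^ 2) := by
    have h := Finset.sum_mul_sq_le_sq_mul_sq Finset.univ u w
    calc (∑ i, u i * w i) ≤ |∑ i, u i * w i| := le_abs_self _
    _ = Real.sqrt ((∑ i, u i * w i)^2) := (Real.sqrt_sq_eq_abs _).symm
    _ ≤ Real.sqrt ((∑ i, u i ^ 2) * ∑ i, w i ^ 2) := Real.sqrt_le_sqrt h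
    _ = _ := Real.sqrt_mul hA _
  have key : (∑ i, (u i + w i)^2) ≤ (Real.sqrt (∑ i, u i ^ 2) + Real.sqrt (∑ i, w i ^ 2))^2 := by
    have e1 : (∑ i, (u i + w i)^2) = (∑ i, u i ^ 2) + 2 * (∑ i, u i * w i) + ∑ i, w i ^ 2 := by
      rw [Finset.mul_sum, ← Finset.sum_add_distrib, ← Finset.sum_add_distrib]
      exact Finset.sum_congr rfl fun i _ => by ring
    have e2 : (Real.sqrt (∑ i, u i ^ 2) + Real.sqrt (∑ i, w i ^ 2))^2
        = (∑ i, u i ^ 2) + 2 * (Real.sqrt (∑ i, u i ^ 2) * Real.sqrt (∑ i, w i ^ 2)) + ∑ i, w i ^ 2 := by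
      rw [add_sq, Real.sq_sqrt hA, Real.sq_sqrt hB]; ring
    rw [e1, e2]; linarith
  calc Real.sqrt (∑ i, (u i + w i)^2) ≤ Real.sqrt ((Real.sqrt (∑ i, u i ^ 2) + Real.sqrt (∑ i, w i ^ 2))^2) := Real.sqrt_le_sqrt key
  _ = _ := Real.sqrt_sq (by positivity)

lemma sqrt_sum_sq_sum_le {ι κ : Type*} [Fintype ι] (s : Finset κ) (f : κ → ι → ℝ) :
    Real.sqrt (∑ i, (∑ p ∈ s, f p i)^2) ≤ ∑ p ∈ s, Real.sqrt (∑ i, f p i ^ 2) := by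
  classical
  induction s using Finset.induction_on with
  | empty => simp
  | insert a s ha ih =>
    simp only [Finset.sum_insert ha]
    exact (minkowski2 _ _).trans (by linarith [ih])

lemma sum_powerset_pow {α : Type*} (s : Finset α) (z : ℝ) :
    ∑ E ∈ s.powerset, z ^ E.card = (z + 1) ^ s.card := by
  classical
  have := Finset.prod_add (fun _ : α => z) (fun _ => (1:ℝ)) s
  simp only [Finset.prod_const, one_pow, mul_one] at this
  rw [← this]

variable {k : ℕ}

lemma inv_card_split (π : Equiv.Perm (Fin k)) (hπ : ∀ a, π (π a) = a) :
    (univ.filter fun a : Fin k => π a = a).card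
      + 2 * (univ.filter fun a : Fin k => a < π a).card = k := by
  classical
  have h1 : (univ.filter fun a : Fin k => a < π a).card
      = (univ.filter fun a : Fin k => π a < a).card := by
    apply Finset.card_nbij (fun a => π a)
    · intro a ha; simp only [Finset.mem_coe, mem_filter, mem_univ, true_and] at ha ⊢; rw [hπ]; exact ha
    · exact fun a _ b _ hab => π.injective hab
    · intro b hb; simp only [coe_filter, Set.mem_setOf_eq, mem_univ, true_and,
        Set.mem_image] at hb ⊢
      exact ⟨π b, by rw [hπ]; exact hb, hπ b⟩
  have h2 : (univ.filter fun a : Fin k => ¬ π a = a)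
      = (univ.filter fun a : Fin k => a < π a) ∪ (univ.filter fun a : Fin k => π a < a) := by
    ext a
    simp only [mem_filter, mem_univ, true_and, mem_union]
    constructor
    · intro h; exact (Ne.lt_or_gt h).symm.imp (fun h => h) (fun h => h)
    · rintro (h | h) <;> intro he <;> rw [he] at h <;> exact lt_irrefl _ h
  have h3 : Disjoint (univ.filter fun a : Fin k => a < π a)
      (univ.filter fun a : Fin k => π a < a) := by
    rw [Finset.disjoint_filter]
    intro a _ h1 h2; exact absurd (h1.trans h2) (lt_irrefl _)
  have h4 := Finset.card_filter_add_card_filter_not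
    (s := (univ : Finset (Fin k))) (p := fun a => π a = a)
  rw [h2, Finset.card_union_of_disjoint h3, ← h1, Finset.card_univ, Fintype.card_fin] at h4
  omega

noncomputable def Emap (π : Equiv.Perm (Fin k)) : Finset (Fin k × Fin k) :=
  (univ.filter fun a : Fin k => a < π a).image fun a => (a, π a)

lemma mem_Emap {π : Equiv.Perm (Fin k)} {p : Fin k × Fin k} :
    p ∈ Emap π ↔ p.1 < p.2 ∧ π p.1 = p.2 := by
  simp only [Emap, mem_image, mem_filter, mem_univ, true_and]
  constructor
  · rintro ⟨a, ha, rfl⟩; exact ⟨ha, rfl⟩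
  · rintro ⟨h1, h2⟩; exact ⟨p.1, by rw [h2]; exact h1, by rw [h2]⟩

lemma Emap_card (π : Equiv.Perm (Fin k)) :
    (Emap π).card = (univ.filter fun a : Fin k => a < π a).card :=
  Finset.card_image_of_injective _ (fun a b h => (Prod.mk.injEq _ _ _ _ ▸ h).1)

lemma Emap_inj {π σ : Equiv.Perm (Fin k)} (hπ : ∀ a, π (π a) = a) (hσ : ∀ a, σ (σ a) = a)
    (h : Emap π = Emap σ) : π = σ := by
  have key : ∀ τ υ : Equiv.Perm (Fin k), (∀ a, τ (τ a) = a) → (∀ a, υ (υ a) = a) →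
      Emap τ = Emap υ → ∀ a : Fin k, a < τ a → τ a = υ a := by
    intro τ υ hτ hυ hE a ha
    have h1 : (a, τ a) ∈ Emap τ := mem_Emap.2 ⟨ha, rfl⟩
    rw [hE] at h1
    exact ((mem_Emap.1 h1).2).symm
  apply Equiv.ext
  intro a
  rcases lt_trichotomy a (π a) with hlt | heq | hgt
  · exact key π σ hπ hσ h a hlt
  · have hfix : π a = a := heq.symm
    by_contra hne
    have hne' : σ a ≠ a := fun he => hne (by rw [hfix, he])
    rcases hne'.lt_or_gt with h1 | h2
    · -- σ a < a, so σ a < σ (σ a)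
      have h3 : σ a < σ (σ a) := by rw [hσ]; exact h1
      have h4 := key σ π hσ hπ h.symm (σ a) h3
      rw [hσ] at h4
      -- h4 : a = π (σ a); π a = a so π (σ a) = π a, injective gives σ a = a
      exact hne' (π.injective (by rw [← h4, hfix]))
    · have := key σ π hσ hπ h.symm a h2
      exact hne (hfix.trans (this.trans hfix).symm)
  · have h3 : π a < π (π a) := by rw [hπ]; exact hgt
    have h4 := key π σ hπ hσ h (π a) h3
    rw [hπ] at h4
    -- h4 : a = σ (π a)
    have := congrArg σ h4
    rw [hσ] at this
    rw [this]

lemma ltpairs_card : 2 * (univ.filter fun p : Fin k × Fin k => p.1 < p.2).card + k ≤ k * k := by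
  classical
  set LT := univ.filter fun p : Fin k × Fin k => p.1 < p.2 with hLT
  set GT := univ.filter fun p : Fin k × Fin k => p.2 < p.1 with hGT
  have hcard : LT.card = GT.card := by
    apply Finset.card_nbij Prod.swap
    · intro p hp; simp only [hLT, hGT, Finset.mem_coe, mem_filter, mem_univ, true_and] at hp ⊢; exact hp
    · exact fun a _ b _ hab => Prod.swap_injective hab
    · intro p hp
      simp only [hGT, coe_filter, Set.mem_setOf_eq, mem_univ, true_and, Set.mem_image] at hp ⊢
      exact ⟨p.swap, by simpa [hLT] using hp, Prod.swap_swap p⟩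
  have hdisj : Disjoint LT GT := by
    rw [hLT, hGT, Finset.disjoint_filter]
    intro p _ h1 h2; exact absurd (h1.trans h2) (lt_irrefl _)
  have hsub : LT ∪ GT ⊆ (univ : Finset (Fin k)).offDiag := by
    intro p hp
    rw [Finset.mem_offDiag]
    rcases Finset.mem_union.1 hp with h | h <;>
      simp only [hLT, hGT, mem_filter, mem_univ, true_and] at h
    · exact ⟨mem_univ _, mem_univ _, ne_of_lt h⟩
    · exact ⟨mem_univ _, mem_univ _, (ne_of_lt h).symm⟩
  have := Finset.card_le_card hsub
  rw [Finset.card_union_of_disjoint hdisj, Finset.offDiag_card] at this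
  simp only [Finset.card_univ, Fintype.card_fin] at this
  have hk : k ≤ k * k := by
    rcases Nat.eq_zero_or_pos k with h | h
    · simp [h]
    · exact Nat.le_mul_of_pos_left k h
  omega

lemma sum_z_pow_le (z : ℝ) (hz : 0 ≤ z) :
    ∑ π ∈ univ.filter (fun π : Equiv.Perm (Fin k) => π * π = 1),
      z ^ (univ.filter fun a : Fin k => a < π a).card
    ≤ Real.exp (z * ((k : ℝ) * ((k : ℝ) - 1) / 2)) := by
  classical
  have hinv : ∀ π ∈ univ.filter (fun π : Equiv.Perm (Fin k) => π * π = 1),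
      ∀ a, π (π a) = a := by
    intro π hπ a
    have := (mem_filter.1 hπ).2
    have := congrArg (fun τ : Equiv.Perm (Fin k) => τ a) this
    simpa using this
  calc ∑ π ∈ univ.filter (fun π : Equiv.Perm (Fin k) => π * π = 1),
        z ^ (univ.filter fun a : Fin k => a < π a).card
      = ∑ π ∈ univ.filter (fun π : Equiv.Perm (Fin k) => π * π = 1), z ^ (Emap π).card := by
        exact Finset.sum_congr rfl fun π _ => by rw [Emap_card]
    _ = ∑ E ∈ (univ.filter (fun π : Equiv.Perm (Fin k) => π * π = 1)).image Emap,
          z ^ E.card := by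
        rw [Finset.sum_image]
        intro π hπ σ hσ h
        exact Emap_inj (hinv π hπ) (hinv σ hσ) h
    _ ≤ ∑ E ∈ (univ.filter fun p : Fin k × Fin k => p.1 < p.2).powerset, z ^ E.card := by
        apply Finset.sum_le_sum_of_subset_of_nonneg
        · intro E hE
          rw [Finset.mem_image] at hE
          obtain ⟨π, hπ, rfl⟩ := hE
          rw [Finset.mem_powerset]
          intro p hp
          rw [mem_Emap] at hp
          simp only [mem_filter, mem_univ, true_and]
          exact hp.1
        · intro E _ _; positivity
    _ = (z + 1) ^ (univ.filter fun p : Fin k × Fin k => p.1 < p.2).card :=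
        sum_powerset_pow _ z
    _ ≤ Real.exp (z * ((k : ℝ) * ((k : ℝ) - 1) / 2)) := by
        set N := (univ.filter fun p : Fin k × Fin k => p.1 < p.2).card with hN
        have h1 : (z + 1) ^ N ≤ Real.exp z ^ N :=
          pow_le_pow_left₀ (by linarith) (Real.add_one_le_exp z) N
        have h2 : Real.exp z ^ N = Real.exp (z * N) := by
          rw [← Real.exp_nat_mul]; ring_nf
        have h3 : (N : ℝ) ≤ (k : ℝ) * ((k : ℝ) - 1) / 2 := by
          have := @ltpairs_card k
          rw [← hN] at this
          have : (2 * N + k : ℝ) ≤ (k : ℝ) * k := by exact_mod_cast this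
          linarith
        calc (z + 1) ^ N ≤ Real.exp (z * N) := h2 ▸ h1
          _ ≤ Real.exp (z * ((k : ℝ) * ((k : ℝ) - 1) / 2)) :=
            Real.exp_le_exp.2 (by nlinarith)
lemma sum_sq_term {k m : ℕ} (π : Equiv.Perm (Fin k)) (hπ : ∀ a, π (π a) = a) (x : Fin m → ℝ) :
    ∑ i : Fin k → Fin m,
      ((∏ a ∈ univ.filter (fun a : Fin k => π a = a), x (i a)) *
       (∏ a ∈ univ.filter (fun a : Fin k => a < π a),
          -(if i a = i (π a) then (1:ℝ) else 0)))^2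
    = (∑ j, x j ^ 2) ^ (univ.filter (fun a : Fin k => π a = a)).card
      * (m:ℝ) ^ (univ.filter (fun a : Fin k => a < π a)).card := by
  classical
  set p : Fin k → Prop := fun a => π a < a with hp
  have hpdec : DecidablePred p := fun a => inferInstanceAs (Decidable (π a < a))
  -- abbreviations for the subtypes
  -- step 0 : simplify the square
  have step0 : ∀ i : Fin k → Fin m,
      ((∏ a ∈ univ.filter (fun a : Fin k => π a = a), x (i a)) *
       (∏ a ∈ univ.filter (fun a : Fin k => a < π a),
          -(if i a = i (π a) then (1:ℝ) else 0)))^2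
      = (∏ a ∈ univ.filter (fun a : Fin k => π a = a), x (i a) ^ 2) *
        (∏ a ∈ univ.filter (fun a : Fin k => a < π a),
          (if i a = i (π a) then (1:ℝ) else 0)) := by
    intro i
    rw [mul_pow, ← Finset.prod_pow, ← Finset.prod_pow]
    congr 1
    refine Finset.prod_congr rfl fun a _ => ?_
    rw [neg_sq]
    by_cases h : i a = i (π a) <;> simp [h]
  simp only [step0]
  -- step 1 : reindex the sum by the equivalence
  set e := (Equiv.piEquivPiSubtypeProd p fun _ => Fin m).symm with he
  rw [← Equiv.sum_comp e (fun i : Fin k → Fin m =>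
    (∏ a ∈ univ.filter (fun a : Fin k => π a = a), x (i a) ^ 2) *
    (∏ a ∈ univ.filter (fun a : Fin k => a < π a),
      (if i a = i (π a) then (1:ℝ) else 0)))]
  rw [Fintype.sum_prod_type]
  -- facts about e
  have he_apply : ∀ (u : ∀ _ : {a // p a}, Fin m) (v : ∀ _ : {a // ¬ p a}, Fin m) (a : Fin k),
      e (u, v) a = if h : p a then u ⟨a, h⟩ else v ⟨a, h⟩ := fun u v a =>
    Equiv.piEquivPiSubtypeProd_symm_apply p (fun _ => Fin m) (u, v) a
  have hnp_of_fix : ∀ a : Fin k, π a = a → ¬ p a := by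
    intro a h; rw [hp]; simp only [h]; exact lt_irrefl a
  have hnp_of_lt : ∀ a : Fin k, a < π a → ¬ p a := fun a h => not_lt.2 (le_of_lt h)
  have hp_of_lt : ∀ a : Fin k, a < π a → p (π a) := by
    intro a h; rw [hp]; simp only [hπ]; exact h
  have hnp_pi : ∀ b : {a // p a}, ¬ p (π b.1) := by
    intro b hlt
    have hlt' : π (π b.1) < π b.1 := hlt
    rw [hπ] at hlt'
    exact absurd hlt' (not_lt.2 (le_of_lt b.2))
  -- step 2 : rewrite the summand for fixed (u, v)
  have step2 : ∀ (u : ∀ _ : {a // p a}, Fin m) (v : ∀ _ : {a // ¬ p a}, Fin m),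
      (∏ a ∈ univ.filter (fun a : Fin k => π a = a), x (e (u, v) a) ^ 2) *
      (∏ a ∈ univ.filter (fun a : Fin k => a < π a),
        (if e (u, v) a = e (u, v) (π a) then (1:ℝ) else 0))
      = (∏ b : {a // ¬ p a}, if π b.1 = b.1 then x (v b) ^ 2 else 1) *
        (∏ b : {a // p a},
          if v ⟨π b.1, hnp_pi b⟩ = u b
          then (1:ℝ) else 0) := by
    intro u v
    congr 1
    · -- fixed-point product
      rw [← Finset.prod_filter (fun b : {a // ¬ p a} => π b.1 = b.1)
        (fun b => x (v b) ^ 2)]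
      apply Finset.prod_bij
        (i := fun (a : Fin k) (ha : a ∈ univ.filter (fun a : Fin k => π a = a)) =>
          (⟨a, hnp_of_fix a (by simpa using ha)⟩ : {a // ¬ p a}))
      · intro a ha
        simp only [mem_filter, mem_univ, true_and] at ha ⊢
        exact ha
      · intro a₁ h₁ a₂ h₂ hh
        exact congrArg Subtype.val hh
      · intro b hb
        simp only [mem_filter, mem_univ, true_and] at hb
        exact ⟨b.1, by simpa using hb, Subtype.ext rfl⟩
      · intro a ha
        simp only [mem_filter, mem_univ, true_and] at ha
        rw [he_apply, dif_neg (hnp_of_fix a ha)]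
    · -- pair product
      apply Finset.prod_bij
        (i := fun (a : Fin k) (ha : a ∈ univ.filter (fun a : Fin k => a < π a)) =>
          (⟨π a, hp_of_lt a (by simpa using ha)⟩ : {a // p a}))
      · intro a ha; exact mem_univ _
      · intro a₁ h₁ a₂ h₂ hh
        exact π.injective (congrArg Subtype.val hh)
      · intro b _
        refine ⟨π b.1, ?_, ?_⟩
        · simp only [mem_filter, mem_univ, true_and]
          rw [hπ]; exact b.2
        · exact Subtype.ext (hπ b.1)
      · intro a ha
        simp only [mem_filter, mem_univ, true_and] at ha
        rw [he_apply, he_apply, dif_neg (hnp_of_lt a ha), dif_pos (hp_of_lt a ha)]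
        have hs : (⟨π (π a), hnp_pi ⟨π a, hp_of_lt a ha⟩⟩ : {a // ¬ p a})
            = ⟨a, hnp_of_lt a ha⟩ := Subtype.ext (hπ a)
        rw [hs]
  simp only [step2]
  -- step 3 : sum over u is 1, then sum over v
  rw [Finset.sum_comm]
  have step3 : ∀ v : ∀ _ : {a // ¬ p a}, Fin m,
      ∑ u : ∀ _ : {a // p a}, Fin m,
        (∏ b : {a // ¬ p a}, if π b.1 = b.1 then x (v b) ^ 2 else 1) *
        (∏ b : {a // p a},
          if v ⟨π b.1, hnp_pi b⟩ = u b
          then (1:ℝ) else 0)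
      = ∏ b : {a // ¬ p a}, if π b.1 = b.1 then x (v b) ^ 2 else 1 := by
    intro v
    rw [← Finset.mul_sum]
    have : ∑ u : ∀ _ : {a // p a}, Fin m,
        ∏ b : {a // p a},
          (if v ⟨π b.1, hnp_pi b⟩ = u b
          then (1:ℝ) else 0) = 1 := by
      rw [sum_fn_prod (fun (b : {a // p a}) (j : Fin m) =>
        if v ⟨π b.1, hnp_pi b⟩ = j
        then (1:ℝ) else 0)]
      rw [Finset.prod_eq_one]
      intro b _
      rw [Finset.sum_ite_eq]
      simp
    rw [this, mul_one]
  simp only [step3]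
  rw [sum_fn_prod (fun (b : {a // ¬ p a}) (j : Fin m) =>
    if π b.1 = b.1 then x j ^ 2 else 1)]
  have step4 : ∀ b : {a // ¬ p a},
      (∑ j, if π b.1 = b.1 then x j ^ 2 else (1:ℝ))
      = if π b.1 = b.1 then (∑ j, x j ^ 2) else (m : ℝ) := by
    intro b
    by_cases h : π b.1 = b.1 <;> simp [h]
  simp only [step4]
  have cA : (univ.filter fun b : {a // ¬ p a} => π b.1 = b.1).card
      = (univ.filter fun a : Fin k => π a = a).card := by
    apply Finset.card_nbij (fun b => b.1)
    · intro b hb; simp only [Finset.mem_coe, mem_filter, mem_univ, true_and] at hb ⊢; exact hb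
    · intro b₁ _ b₂ _ h; exact Subtype.ext h
    · intro a ha
      simp only [coe_filter, Set.mem_setOf_eq, mem_univ, true_and, Set.mem_image] at ha ⊢
      exact ⟨⟨a, hnp_of_fix a ha⟩, ha, rfl⟩
  have cB : (univ.filter fun b : {a // ¬ p a} => ¬ π b.1 = b.1).card
      = (univ.filter fun a : Fin k => a < π a).card := by
    apply Finset.card_nbij (fun b => b.1)
    · intro b hb
      simp only [Finset.mem_coe, mem_filter, mem_univ, true_and] at hb ⊢
      rcases Ne.lt_or_gt hb with h | h
      · exact absurd h b.2
      · exact h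
    · intro b₁ _ b₂ _ h; exact Subtype.ext h
    · intro a ha
      simp only [coe_filter, Set.mem_setOf_eq, mem_univ, true_and, Set.mem_image] at ha ⊢
      refine ⟨⟨a, hnp_of_lt a ha⟩, ?_, rfl⟩
      intro h
      have h' : π a = a := h
      rw [h'] at ha
      exact lt_irrefl a ha
  rw [Finset.prod_ite (fun _ => (∑ j, x j ^ 2)) (fun _ => (m : ℝ))]
  rw [Finset.prod_const, Finset.prod_const, cA, cB]


lemma fact_bound (k : ℕ) :
    (Real.sqrt (Nat.factorial k))⁻¹ ≤ 2 ^ k * (k : ℝ) ^ (-(k : ℝ) / 2) := by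
  rcases Nat.eq_zero_or_pos k with rfl | hk
  · norm_num
  have hfact : (0:ℝ) < (Nat.factorial k : ℝ) := by exact_mod_cast k.factorial_pos
  have hkk : ((k:ℝ)) ^ k ≤ 4 ^ k * (Nat.factorial k : ℝ) := by
    have h1 := Real.pow_div_factorial_le_exp (x := (k:ℝ)) (Nat.cast_nonneg k) k
    have h2 : Real.exp (k:ℝ) = Real.exp 1 ^ k := by
      rw [← Real.exp_one_rpow (k:ℝ), Real.rpow_natCast]
    have h3 : Real.exp 1 ^ k ≤ 4 ^ k :=
      pow_le_pow_left₀ (Real.exp_pos 1).le (by linarith [Real.exp_one_lt_d9]) k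
    have h4 : ((k:ℝ)) ^ k / (Nat.factorial k : ℝ) ≤ 4 ^ k := by
      calc ((k:ℝ)) ^ k / (Nat.factorial k : ℝ) ≤ Real.exp (k:ℝ) := h1
        _ = Real.exp 1 ^ k := h2
        _ ≤ 4 ^ k := h3
    calc ((k:ℝ)) ^ k = ((k:ℝ)) ^ k / (Nat.factorial k : ℝ) * (Nat.factorial k : ℝ) := by
          field_simp
      _ ≤ 4 ^ k * (Nat.factorial k : ℝ) := mul_le_mul_of_nonneg_right h4 hfact.le
  have hrw : Real.sqrt ((k:ℝ) ^ k) = (k:ℝ) ^ ((k:ℝ) / 2) := by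
    rw [Real.sqrt_eq_rpow, ← Real.rpow_natCast ((k:ℝ)) k, ← Real.rpow_mul (Nat.cast_nonneg k)]
    ring_nf
  have h5 : Real.sqrt ((k:ℝ) ^ k) ≤ 2 ^ k * Real.sqrt (Nat.factorial k : ℝ) := by
    calc Real.sqrt ((k:ℝ) ^ k) ≤ Real.sqrt (4 ^ k * (Nat.factorial k : ℝ)) :=
          Real.sqrt_le_sqrt hkk
      _ = 2 ^ k * Real.sqrt (Nat.factorial k : ℝ) := by
          rw [show ((4:ℝ) ^ k) = ((2:ℝ) ^ k) ^ 2 by rw [← pow_mul, pow_mul']; norm_num,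
            Real.sqrt_mul (by positivity), Real.sqrt_sq (by positivity)]
  have hpos : (0:ℝ) < Real.sqrt ((k:ℝ) ^ k) :=
    Real.sqrt_pos.2 (pow_pos (by exact_mod_cast hk) k)
  have hsf : (0:ℝ) < Real.sqrt (Nat.factorial k : ℝ) := Real.sqrt_pos.2 hfact
  have h6 : ((2:ℝ) ^ k * Real.sqrt (Nat.factorial k : ℝ))⁻¹ ≤ (Real.sqrt ((k:ℝ) ^ k))⁻¹ :=
    inv_anti₀ hpos h5
  have h7 : (k : ℝ) ^ (-(k : ℝ) / 2) = (Real.sqrt ((k:ℝ) ^ k))⁻¹ := by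
    rw [hrw, neg_div, Real.rpow_neg (Nat.cast_nonneg k)]
  rw [h7]
  calc (Real.sqrt (Nat.factorial k : ℝ))⁻¹
      = 2 ^ k * ((2:ℝ) ^ k * Real.sqrt (Nat.factorial k : ℝ))⁻¹ := by
        rw [mul_inv]
        field_simp
    _ ≤ 2 ^ k * (Real.sqrt ((k:ℝ) ^ k))⁻¹ :=
        mul_le_mul_of_nonneg_left h6 (by positivity)

/-- For ‖x‖₂ ≤ B (B > 0),
‖H_k(x)‖₂ ≤ 2^k m^{k/4} B^k k^{−k/2} exp( (k(k−1)/2) / B² ). -/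
theorem stmt9 (m k : ℕ) (B : ℝ) (hB : 0 < B) (x : Fin m → ℝ)
    (hx : Real.sqrt (∑ i, x i ^ 2) ≤ B) :
    Real.sqrt (hermiteNormSq m k x)
      ≤ 2 ^ k * (m : ℝ) ^ ((k : ℝ) / 4) * B ^ k * (k : ℝ) ^ (-(k : ℝ) / 2)
        * Real.exp (((k : ℝ) * ((k : ℝ) - 1) / 2) / B ^ 2) := by
  classical
  have hsum0 : (0:ℝ) ≤ ∑ i, x i ^ 2 := Finset.sum_nonneg fun i _ => sq_nonneg _
  have hsumB : (∑ i, x i ^ 2) ≤ B ^ 2 := by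
    calc (∑ i, x i ^ 2) = Real.sqrt (∑ i, x i ^ 2) ^ 2 := (Real.sq_sqrt hsum0).symm
      _ ≤ B ^ 2 := pow_le_pow_left₀ (Real.sqrt_nonneg _) hx 2
  rcases Nat.eq_zero_or_pos k with rfl | hk
  · -- k = 0
    have hone : ∀ i : Fin 0 → Fin m, hermiteEntry m 0 x i = 1 := by
      intro i
      rw [hermiteEntry]
      have h1 : (univ.filter (fun π : Equiv.Perm (Fin 0) => π * π = 1)) = univ :=
        Finset.filter_true_of_mem (fun π _ => Subsingleton.elim _ _)
      rw [h1]
      simp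
    have h2 : hermiteNormSq m 0 x = 1 := by
      rw [hermiteNormSq]
      simp [hone]
    rw [h2, Real.sqrt_one]
    norm_num [Real.rpow_zero]
  rcases Nat.eq_zero_or_pos m with rfl | hm
  · -- m = 0, k ≥ 1
    have hie : IsEmpty (Fin k → Fin 0) := ⟨fun f => (f ⟨0, hk⟩).elim0⟩
    have h0 : hermiteNormSq 0 k x = 0 := by
      rw [hermiteNormSq, Finset.univ_eq_empty, Finset.sum_empty]
    rw [h0, Real.sqrt_zero]
    positivity
  -- main case : k ≥ 1, m ≥ 1
  set S := ∑ i, x i ^ 2 with hS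
  set z := ((B ^ 2)⁻¹ : ℝ) with hz
  have hz0 : (0:ℝ) ≤ z := by positivity
  set Inv := univ.filter (fun π : Equiv.Perm (Fin k) => π * π = 1) with hInv
  set c := (Real.sqrt (Nat.factorial k : ℝ))⁻¹ with hc
  have hc0 : (0:ℝ) ≤ c := by positivity
  set f : Equiv.Perm (Fin k) → (Fin k → Fin m) → ℝ := fun π i =>
    (∏ a ∈ univ.filter (fun a : Fin k => π a = a), x (i a)) *
    (∏ a ∈ univ.filter (fun a : Fin k => a < π a),
      -(if i a = i (π a) then (1:ℝ) else 0)) with hf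
  have hinv : ∀ π ∈ Inv, ∀ a, π (π a) = a := by
    intro π hπ a
    have h := (Finset.mem_filter.1 hπ).2
    have := congrArg (fun τ : Equiv.Perm (Fin k) => τ a) h
    simpa using this
  -- Step 1/2 : pull out the constant
  have step12 : Real.sqrt (hermiteNormSq m k x)
      = c * Real.sqrt (∑ i : Fin k → Fin m, (∑ π ∈ Inv, f π i) ^ 2) := by
    rw [hermiteNormSq]
    have : ∀ i : Fin k → Fin m, hermiteEntry m k x i ^ 2
        = c ^ 2 * (∑ π ∈ Inv, f π i) ^ 2 := by
      intro i
      rw [hermiteEntry, mul_pow]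
    simp only [this]
    rw [← Finset.mul_sum, Real.sqrt_mul (sq_nonneg c), Real.sqrt_sq hc0]
  rw [step12]
  -- Step 3 : Minkowski
  have step3 := sqrt_sum_sq_sum_le Inv f
  -- Step 4 : per-involution bound
  have step4 : ∀ π ∈ Inv, Real.sqrt (∑ i : Fin k → Fin m, f π i ^ 2)
      ≤ (m:ℝ) ^ ((k:ℝ)/4) * (B ^ k * z ^ (univ.filter (fun a : Fin k => a < π a)).card) := by
    intro π hπ
    set cF := (univ.filter (fun a : Fin k => π a = a)).card with hcF
    set cP := (univ.filter (fun a : Fin k => a < π a)).card with hcP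
    have hsplit : cF + 2 * cP = k := inv_card_split π (hinv π hπ)
    have hval : (∑ i : Fin k → Fin m, f π i ^ 2) = S ^ cF * (m:ℝ) ^ cP := by
      rw [hf]
      exact sum_sq_term π (hinv π hπ) x
    rw [hval]
    have h1 : Real.sqrt (S ^ cF * (m:ℝ) ^ cP)
        = Real.sqrt (S ^ cF) * Real.sqrt ((m:ℝ) ^ cP) :=
      Real.sqrt_mul (pow_nonneg hsum0 _) _
    have h2 : Real.sqrt (S ^ cF) ≤ B ^ cF := by
      calc Real.sqrt (S ^ cF) ≤ Real.sqrt ((B ^ 2) ^ cF) :=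
            Real.sqrt_le_sqrt (pow_le_pow_left₀ hsum0 hsumB cF)
        _ = B ^ cF := by
            rw [← pow_mul, pow_mul', Real.sqrt_sq (by positivity)]
    have h3 : Real.sqrt ((m:ℝ) ^ cP) = (m:ℝ) ^ ((cP:ℝ)/2) := by
      rw [Real.sqrt_eq_rpow, ← Real.rpow_natCast ((m:ℝ)) cP,
        ← Real.rpow_mul (Nat.cast_nonneg m)]
      ring_nf
    have h4 : (m:ℝ) ^ ((cP:ℝ)/2) ≤ (m:ℝ) ^ ((k:ℝ)/4) := by
      apply Real.rpow_le_rpow_of_exponent_le (by exact_mod_cast hm)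
      have : (2 * cP : ℝ) ≤ (k : ℝ) := by exact_mod_cast (by omega : 2 * cP ≤ k)
      linarith
    have h5 : B ^ cF = B ^ k * z ^ cP := by
      have e1 : B ^ cF * (B ^ 2) ^ cP = B ^ k := by
        rw [← pow_mul, ← pow_add]
        congr 1
      have e2 : ((B:ℝ) ^ 2) ^ cP ≠ 0 := by positivity
      rw [hz, inv_pow]
      field_simp
      linarith [e1]
    calc Real.sqrt (S ^ cF * (m:ℝ) ^ cP)
        = Real.sqrt (S ^ cF) * Real.sqrt ((m:ℝ) ^ cP) := h1
      _ ≤ B ^ cF * (m:ℝ) ^ ((k:ℝ)/4) := by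
          rw [h3]
          exact mul_le_mul h2 h4 (by positivity) (by positivity)
      _ = (m:ℝ) ^ ((k:ℝ)/4) * (B ^ k * z ^ cP) := by rw [h5]; ring
  -- Step 5 : sum the bound
  have step5 : (∑ π ∈ Inv, Real.sqrt (∑ i : Fin k → Fin m, f π i ^ 2))
      ≤ (m:ℝ) ^ ((k:ℝ)/4) * (B ^ k *
          Real.exp (z * ((k : ℝ) * ((k : ℝ) - 1) / 2))) := by
    calc (∑ π ∈ Inv, Real.sqrt (∑ i : Fin k → Fin m, f π i ^ 2))
        ≤ ∑ π ∈ Inv, (m:ℝ) ^ ((k:ℝ)/4) *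
            (B ^ k * z ^ (univ.filter (fun a : Fin k => a < π a)).card) :=
          Finset.sum_le_sum step4
      _ = (m:ℝ) ^ ((k:ℝ)/4) * (B ^ k *
            ∑ π ∈ Inv, z ^ (univ.filter (fun a : Fin k => a < π a)).card) := by
          rw [Finset.mul_sum]
          congr 1
          rw [Finset.mul_sum]
      _ ≤ (m:ℝ) ^ ((k:ℝ)/4) * (B ^ k *
            Real.exp (z * ((k : ℝ) * ((k : ℝ) - 1) / 2))) := by
          apply mul_le_mul_of_nonneg_left _ (by positivity)
          apply mul_le_mul_of_nonneg_left _ (by positivity)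
          exact sum_z_pow_le z hz0
  -- assemble
  have hexp : z * ((k : ℝ) * ((k : ℝ) - 1) / 2)
      = ((k : ℝ) * ((k : ℝ) - 1) / 2) / B ^ 2 := by
    rw [hz]; ring
  calc c * Real.sqrt (∑ i : Fin k → Fin m, (∑ π ∈ Inv, f π i) ^ 2)
      ≤ c * ((m:ℝ) ^ ((k:ℝ)/4) * (B ^ k *
          Real.exp (z * ((k : ℝ) * ((k : ℝ) - 1) / 2)))) := by
        apply mul_le_mul_of_nonneg_left _ hc0
        exact step3.trans step5
    _ ≤ (2 ^ k * (k : ℝ) ^ (-(k : ℝ) / 2)) * ((m:ℝ) ^ ((k:ℝ)/4) * (B ^ k *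
          Real.exp (z * ((k : ℝ) * ((k : ℝ) - 1) / 2)))) := by
        apply mul_le_mul_of_nonneg_right (fact_bound k) (by positivity)
    _ = 2 ^ k * (m : ℝ) ^ ((k : ℝ) / 4) * B ^ k * (k : ℝ) ^ (-(k : ℝ) / 2)
        * Real.exp (((k : ℝ) * ((k : ℝ) - 1) / 2) / B ^ 2) := by
        rw [hexp]; ring
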